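/- Let V ∈ ℝ^{n×k̃} have orthonormal columns and W ∈ ℝ^{n×k} have orthonormal columns with exactly one nonzero per row, with k̃ ≤ k. Suppose V = WZ for some Z ∈ ℝ^{k×k̃} with orthonormal columns (ZᵀZ = I_{k̃}). Then for any orthogonal U ∈ O(k̃), the assignment c(i) = argmax over rows of |UᵀVᵀ|_{:,i} is constant on each set 𝒮_j = support of column j of W (assuming the argmax is well-defined, e.g., taking the least such row index). Hence the induced partition of {1,…,n} into at most k̃ clusters never splits any 𝒮_j between two clusters. -/
import Mathlib


open Matrix BigOperators

lemma key_col (n k ktil : ℕ)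
    (W : Matrix (Fin n) (Fin k) ℝ) (Z : Matrix (Fin k) (Fin ktil) ℝ)
    (V : Matrix (Fin n) (Fin ktil) ℝ)
    (hrow : ∀ i : Fin n, ∃! j : Fin k, W i j ≠ 0) (hV : V = W * Z)
    (U : Matrix (Fin ktil) (Fin ktil) ℝ)
    (j : Fin k) (i : Fin n) (hij : W i j ≠ 0) (l : Fin ktil) :
    (Uᵀ * Vᵀ) l i = W i j * (∑ m, U m l * Z j m) := by
  obtain ⟨j0, _, huniq⟩ := hrow i
  have hj0 : j0 = j := (huniq j hij).symm
  subst hj0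
  have hVim : ∀ m, V i m = W i j0 * Z j0 m := by
    intro m
    rw [hV]
    simp only [Matrix.mul_apply]
    rw [Finset.sum_eq_single j0]
    · intro b _ hb
      have : W i b = 0 := by
        by_contra h; exact hb (huniq b h)
      simp [this]
    · simp
  simp only [Matrix.mul_apply, Matrix.transpose_apply, hVim,
    Finset.mul_sum]
  apply Finset.sum_congr rfl
  intro m _
  ring

/-- connected components: W ∈ ℝ^{n×k} has orthonormal columns
with exactly one nonzero per row, V = WZ with Z ∈ ℝ^{k×k̃} having orthonormal
columns, k̃ ≤ k. For any orthogonal U ∈ O(k̃), the argmax-based assignment from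
the columns of |UᵀVᵀ| is constant on each support set S_j of a column of W: the
sets of maximizing rows for two columns indexed in the same S_j coincide, hence
the induced partition (with any fixed tie-breaking rule such as taking the
least maximizing row) never splits an S_j. -/
theorem assignment_constant_on_components
    (n k ktil : ℕ) (hkk : ktil ≤ k)
    (W : Matrix (Fin n) (Fin k) ℝ) (Z : Matrix (Fin k) (Fin ktil) ℝ)
    (V : Matrix (Fin n) (Fin ktil) ℝ)
    (hW : Wᵀ * W = 1)
    (hrow : ∀ i : Fin n, ∃! j : Fin k, W i j ≠ 0)
    (hZ : Zᵀ * Z = 1) (hV : V = W * Z) :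
    ∀ U : Matrix (Fin ktil) (Fin ktil) ℝ, Uᵀ * U = 1 →
      ∀ j : Fin k, ∀ i i' : Fin n, W i j ≠ 0 → W i' j ≠ 0 →
        ∀ r : Fin ktil,
          ((∀ l : Fin ktil, |(Uᵀ * Vᵀ) l i| ≤ |(Uᵀ * Vᵀ) r i|) ↔
           (∀ l : Fin ktil, |(Uᵀ * Vᵀ) l i'| ≤ |(Uᵀ * Vᵀ) r i'|)) := by
  intro U _ j i i' hi hi' r
  have hi0 : 0 < |W i j| := abs_pos.mpr hi
  have hi'0 : 0 < |W i' j| := abs_pos.mpr hi'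
  have key : ∀ (i : Fin n), W i j ≠ 0 → ∀ l,
      |(Uᵀ * Vᵀ) l i| = |W i j| * |∑ m, U m l * Z j m| := by
    intro i hij l
    rw [key_col n k ktil W Z V hrow hV U j i hij l, abs_mul]
  constructor <;> intro h l
  · have := h l
    rw [key i hi l, key i hi r] at this
    rw [key i' hi' l, key i' hi' r]
    exact mul_le_mul_of_nonneg_left
      (le_of_mul_le_mul_left this hi0) (le_of_lt hi'0)
  · have := h l
    rw [key i' hi' l, key i' hi' r] at this
    rw [key i hi l, key i hi r]
    exact mul_le_mul_of_nonneg_left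
      (le_of_mul_le_mul_left this hi'0) (le_of_lt hi0)
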